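/- The ΔIS estimator Î = (Z₊/Z)·(1/S₊) Σ_{s=1}^{S₊} f(x₊^{(s)}) p(x₊^{(s)})/q(x₊^{(s)}) − (Z₋/Z)·(1/S₋) Σ_{s=1}^{S₋} f(x₋^{(s)}) p(x₋^{(s)})/q(x₋^{(s)}), with x₊^{(s)} i.i.d. from q₊ and x₋^{(s)} i.i.d. from q₋ independently, is an unbiased estimator of I = E_{p}[f], i.e., E[Î] = I. -/

import Mathlib

open MeasureTheory
open scoped ENNReal NNReal

lemma deltaIS_aux {D : ℕ} {Ω : Type*} [MeasureSpace Ω] (P : Measure Ω)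
    (g qp : (Fin D → ℝ) → ℝ) (hqp_nonneg : ∀ x, 0 ≤ qp x) (hqp_meas : Measurable qp)
    (X : Ω → (Fin D → ℝ)) (hX : Measurable X)
    (hlaw : Measure.map X P = volume.withDensity (fun x => ENNReal.ofReal (qp x)))
    (hint : Integrable g (volume.withDensity (fun x => ENNReal.ofReal (qp x)))) :
    ((∫ ω, g (X ω) ∂P) = ∫ x, qp x * g x) ∧ Integrable (fun ω => g (X ω)) P ∧
      Integrable (fun x => qp x * g x) := by
  have hd : (fun x => ENNReal.ofReal (qp x)) = fun x => ((qp x).toNNReal : ℝ≥0∞) := by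
    funext x; rfl
  have hmeas : Measurable fun x => (qp x).toNNReal := hqp_meas.real_toNNReal
  have hsmul : (fun x => (qp x).toNNReal • g x) = fun x => qp x * g x := by
    funext x
    simp [NNReal.smul_def, Real.coe_toNNReal _ (hqp_nonneg x)]
  have hint' : Integrable g (volume.withDensity fun x => ((qp x).toNNReal : ℝ≥0∞)) := by
    rwa [← hd]
  have hint2 : Integrable (fun x => qp x * g x) := by
    rw [← hsmul]
    exact (integrable_withDensity_iff_integrable_smul hmeas).1 hint'
  have haesm : AEStronglyMeasurable g (Measure.map X P) := by
    rw [hlaw]; exact hint.aestronglyMeasurable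
  refine ⟨?_, ?_, hint2⟩
  · rw [← integral_map hX.aemeasurable haesm, hlaw, hd,
      integral_withDensity_eq_integral_smul hmeas, hsmul]
  · have := (integrable_map_measure haesm hX.aemeasurable).1 (by rwa [hlaw])
    exact this

/-- **Unbiasedness of the ΔIS estimator.**
With samples `x₊⁽ˢ⁾ ∼ q₊` and `x₋⁽ˢ⁾ ∼ q₋`, the ΔIS estimator
`Î = (Z₊/Z)(1/S₊) Σ f(x₊)p(x₊)/q(x₊) − (Z₋/Z)(1/S₋) Σ f(x₋)p(x₋)/q(x₋)`
satisfies `E[Î] = E_p[f]`. -/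
theorem deltaIS_unbiased
    {D : ℕ} {Ω : Type*} [MeasureSpace Ω] (P : Measure Ω) [IsProbabilityMeasure P]
    (p f qp qm q : (Fin D → ℝ) → ℝ) (Zp Zm Z : ℝ) (Sp Sm : ℕ)
    (hSp : 1 ≤ Sp) (hSm : 1 ≤ Sm)
    -- p is a probability density and f is absolutely integrable against p
    (hp_nonneg : ∀ x, 0 ≤ p x) (hp_one : ∫ x, p x = 1)
    (hfp_int : Integrable (fun x => f x * p x))
    -- the signed mixture proposal
    (hqp_nonneg : ∀ x, 0 ≤ qp x) (hqm_nonneg : ∀ x, 0 ≤ qm x)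
    (hqp_meas : Measurable qp) (hqm_meas : Measurable qm)
    (hqp_one : ∫ x, qp x = 1) (hqm_one : ∫ x, qm x = 1)
    (hZdef : Z = Zp - Zm) (hZ : 0 < Z)
    (hq : ∀ x, q x = (Zp * qp x - Zm * qm x) / Z)
    (hsupp : ∀ x, f x * p x ≠ 0 → 0 < q x)
    -- laws of the samples
    (Xp : Fin Sp → Ω → (Fin D → ℝ)) (Xm : Fin Sm → Ω → (Fin D → ℝ))
    (hXp_meas : ∀ s, Measurable (Xp s)) (hXm_meas : ∀ s, Measurable (Xm s))
    (hXp_law : ∀ s, Measure.map (Xp s) P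
      = volume.withDensity (fun x => ENNReal.ofReal (qp x)))
    (hXm_law : ∀ s, Measure.map (Xm s) P
      = volume.withDensity (fun x => ENNReal.ofReal (qm x)))
    -- integrability of the importance-weighted integrand under q₊ and q₋
    (hint_p : Integrable (fun x => f x * p x / q x)
      (volume.withDensity (fun x => ENNReal.ofReal (qp x))))
    (hint_m : Integrable (fun x => f x * p x / q x)
      (volume.withDensity (fun x => ENNReal.ofReal (qm x)))) :
    ∫ ω, ((Zp / Z) * ((1 : ℝ) / Sp) * ∑ s, f (Xp s ω) * p (Xp s ω) / q (Xp s ω)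
        - (Zm / Z) * ((1 : ℝ) / Sm) * ∑ s, f (Xm s ω) * p (Xm s ω) / q (Xm s ω)) ∂P
      = ∫ x, f x * p x := by
  set g : (Fin D → ℝ) → ℝ := fun x => f x * p x / q x with hg
  have hauxp := fun s => deltaIS_aux P g qp hqp_nonneg hqp_meas (Xp s) (hXp_meas s)
    (hXp_law s) hint_p
  have hauxm := fun s => deltaIS_aux P g qm hqm_nonneg hqm_meas (Xm s) (hXm_meas s)
    (hXm_law s) hint_m
  have hSp0 : (Sp : ℝ) ≠ 0 := Nat.cast_ne_zero.2 (by omega)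
  have hSm0 : (Sm : ℝ) ≠ 0 := Nat.cast_ne_zero.2 (by omega)
  -- integrability of the two sums
  have hintP : Integrable (fun ω => (Zp / Z) * ((1 : ℝ) / Sp) *
      ∑ s, g (Xp s ω)) P := by
    exact ((integrable_finset_sum _ (fun s _ => (hauxp s).2.1)).const_mul _)
  have hintM : Integrable (fun ω => (Zm / Z) * ((1 : ℝ) / Sm) *
      ∑ s, g (Xm s ω)) P := by
    exact ((integrable_finset_sum _ (fun s _ => (hauxm s).2.1)).const_mul _)
  rw [integral_sub hintP hintM, integral_const_mul, integral_const_mul,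
    integral_finset_sum _ (fun s _ => (hauxp s).2.1),
    integral_finset_sum _ (fun s _ => (hauxm s).2.1)]
  simp only [fun s : Fin Sp => (hauxp s).1, fun s : Fin Sm => (hauxm s).1,
    Finset.sum_const, Finset.card_univ, Fintype.card_fin, nsmul_eq_mul]
  have e1 : Zp / Z * (1 / (Sp:ℝ)) * ((Sp:ℝ) * ∫ x, qp x * g x)
      = Zp / Z * ∫ x, qp x * g x := by field_simp
  have e2 : Zm / Z * (1 / (Sm:ℝ)) * ((Sm:ℝ) * ∫ x, qm x * g x)
      = Zm / Z * ∫ x, qm x * g x := by field_simp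
  rw [e1, e2, ← integral_const_mul, ← integral_const_mul,
    ← integral_sub (((hauxp ⟨0, by omega⟩).2.2).const_mul _) (((hauxm ⟨0, by omega⟩).2.2).const_mul _)]
  refine integral_congr_ae (Filter.Eventually.of_forall fun x => ?_)
  have hqx : q x * g x = f x * p x := by
    by_cases hfp : f x * p x = 0
    · simp [hg, hfp]
    · have hq0 : q x ≠ 0 := ne_of_gt (hsupp x hfp)
      simp only [hg]
      field_simp
  calc Zp / Z * (qp x * g x) - Zm / Z * (qm x * g x)
      = ((Zp * qp x - Zm * qm x) / Z) * g x := by ring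
    _ = q x * g x := by rw [← hq]
    _ = f x * p x := hqx
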